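/- arXiv:2003.06636 — 5 statements merged into one kernel-verified Lean document; each statement's English description precedes it below -/
import Mathlib

section
/- Let G, G', H be topological groups with H connected, and let α : G' → G be a group homomorphism whose kernel is discrete. If ψ : H → G' is a continuous map with ψ(1) = 1 and α ∘ ψ a group homomorphism, then ψ is itself a group homomorphism. -/
/- Let G, G', H be topological groups with H connected, and α : G' → G a
(continuous) group homomorphism with discrete kernel.  If ψ : H → G' is a
continuous map with ψ(1) = 1 such that α ∘ ψ is a group homomorphism, then
ψ itself is a group homomorphism. -/
theorem stmt1 {G G' H : Type*}
    [Group G] [TopologicalSpace G] [IsTopologicalGroup G]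
    [Group G'] [TopologicalSpace G'] [IsTopologicalGroup G']
    [Group H] [TopologicalSpace H] [IsTopologicalGroup H] [ConnectedSpace H]
    (α : G' →* G) (hαc : Continuous α) (hker : DiscreteTopology α.ker)
    (ψ : H → G') (hψc : Continuous ψ) (hψ1 : ψ 1 = 1)
    (hcomp : ∀ a b : H, α (ψ (a * b)) = α (ψ a) * α (ψ b)) :
    ∀ a b : H, ψ (a * b) = ψ a * ψ b := by
  intro a b
  set F : H × H → α.ker := fun p => ⟨ψ (p.1 * p.2) * (ψ p.1 * ψ p.2)⁻¹, by
    simp [MonoidHom.mem_ker, hcomp]⟩ with hF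
  have hFc : Continuous F := by
    apply Continuous.subtype_mk
    fun_prop
  have hlc : IsLocallyConstant F := (IsLocallyConstant.iff_continuous F).mpr hFc
  have h := hlc.apply_eq_of_preconnectedSpace (a, b) (1, 1)
  have h2 : ψ (a * b) * (ψ a * ψ b)⁻¹ = 1 := by
    have := congrArg Subtype.val h
    simpa [hF, hψ1] using this
  exact mul_inv_eq_one.mp h2
end

section
/- Let G be a topological group, G⁰ its identity component, and H a subgroup with G = G⁰ · H. Let ρ : P → Q be a double cover of topological groups (continuous surjective homomorphism with kernel of order 2) and π : G → Q a continuous homomorphism. Suppose π|_{G⁰} lifts to a continuous homomorphism π̂₁ : G⁰ → P and π|_H lifts to a continuous homomorphism π̂₂ : H → P, and π̂₁ and π̂₂ agree on G⁰ ∩ H. Then π lifts to a continuous homomorphism π̂ : G → P with ρ ∘ π̂ = π. -/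
/- Lifting criterion for G = G⁰ · H through a double cover ρ : P → Q:
if π|_{G⁰} and π|_H lift compatibly, then π lifts. -/
theorem stmt2 {G P Q : Type*}
    [Group G] [TopologicalSpace G] [IsTopologicalGroup G]
    [Group P] [TopologicalSpace P] [IsTopologicalGroup P]
    [Group Q] [TopologicalSpace Q] [IsTopologicalGroup Q]
    (G0 : Subgroup G) [G0.Normal]
    (hG0 : (G0 : Set G) = connectedComponent (1 : G))
    (hopen : IsOpen (G0 : Set G))
    (H : Subgroup G) (hGH : ∀ g : G, ∃ a ∈ G0, ∃ h ∈ H, g = a * h)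
    (ρ : P →* Q) (hρc : Continuous ρ) (hρs : Function.Surjective ρ)
    (hker : Nat.card ρ.ker = 2) (hkerd : DiscreteTopology ρ.ker)
    (π : G →* Q) (hπc : Continuous π)
    (π₁ : G0 →* P) (hπ₁c : Continuous π₁) (hπ₁ : ∀ x : G0, ρ (π₁ x) = π x)
    (π₂ : H →* P) (hπ₂c : Continuous π₂) (hπ₂ : ∀ x : H, ρ (π₂ x) = π x)
    (hagree : ∀ (g : G) (h1 : g ∈ G0) (h2 : g ∈ H), π₁ ⟨g, h1⟩ = π₂ ⟨g, h2⟩) :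
    ∃ πh : G →* P, Continuous πh ∧ ∀ g : G, ρ (πh g) = π g := by
  classical
  -- G0 is preconnected
  have hconn : IsPreconnected (G0 : Set G) := by
    rw [hG0]; exact isPreconnected_connectedComponent
  haveI hps : PreconnectedSpace G0 := isPreconnected_iff_preconnectedSpace.mp hconn
  have hnorm : G0.Normal := inferInstance
  have hconj : ∀ (h : H) (a : G0), (h : G) * a * (h : G)⁻¹ ∈ G0 := fun h a =>
    hnorm.conj_mem a a.2 h
  -- key conjugation compatibility via connectedness
  have key : ∀ (h : H) (a : G0),
      π₁ ⟨(h : G) * a * (h : G)⁻¹, hconj h a⟩ = π₂ h * π₁ a * (π₂ h)⁻¹ := by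
    intro h
    set c : G0 → G0 := fun a => ⟨(h : G) * a * (h : G)⁻¹, hconj h a⟩ with hc
    have hcc : Continuous c := by
      apply Continuous.subtype_mk
      exact (continuous_const.mul continuous_subtype_val).mul continuous_const
    have hF : ∀ a : G0, π₂ h * π₁ a * (π₂ h)⁻¹ * (π₁ (c a))⁻¹ ∈ ρ.ker := by
      intro a
      have : ρ (π₂ h * π₁ a * (π₂ h)⁻¹ * (π₁ (c a))⁻¹) = 1 := by
        rw [map_mul, map_mul, map_mul, map_inv, map_inv, hπ₁, hπ₂, hπ₁]
        have : ((c a : G0) : G) = (h : G) * a * (h : G)⁻¹ := rfl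
        rw [this]
        simp only [map_mul, map_inv]
        group
      exact this
    set F : G0 → ρ.ker := fun a => ⟨π₂ h * π₁ a * (π₂ h)⁻¹ * (π₁ (c a))⁻¹, hF a⟩ with hFd
    have hFc : Continuous F := by
      apply Continuous.subtype_mk
      exact ((continuous_const.mul hπ₁c).mul continuous_const).mul
        ((hπ₁c.comp hcc).inv)
    have hc1 : c 1 = 1 := by
      apply Subtype.ext
      show (h : G) * (1 : G) * (h : G)⁻¹ = 1
      simp
    have hF1 : F 1 = 1 := by
      apply Subtype.ext
      show π₂ h * π₁ 1 * (π₂ h)⁻¹ * (π₁ (c 1))⁻¹ = 1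
      rw [hc1]; simp
    intro a
    have := hps.constant hFc (x := a) (y := 1)
    rw [hF1] at this
    have h2 : π₂ h * π₁ a * (π₂ h)⁻¹ * (π₁ (c a))⁻¹ = 1 := by
      have := congrArg (Subtype.val) this
      exact this
    have : π₂ h * π₁ a * (π₂ h)⁻¹ = π₁ (c a) := by
      rw [← mul_right_cancel_iff (a := (π₁ (c a))⁻¹), h2]; group
    exact this.symm
  -- well-definedness of the product formula
  have L : ∀ (a : G0) (h : H) (a' : G0) (h' : H), (a : G) * h = (a' : G) * h' →
      π₁ a * π₂ h = π₁ a' * π₂ h' := by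
    intro a h a' h' heq
    have e : ((a' : G))⁻¹ * a = (h' : G) * (h : G)⁻¹ := by
      calc ((a' : G))⁻¹ * a = ((a' : G))⁻¹ * ((a : G) * h) * (h : G)⁻¹ := by group
        _ = ((a' : G))⁻¹ * ((a' : G) * h') * (h : G)⁻¹ := by rw [heq]
        _ = (h' : G) * (h : G)⁻¹ := by group
    have m1 : ((a' : G))⁻¹ * a ∈ G0 := G0.mul_mem (G0.inv_mem a'.2) a.2
    have m2 : ((a' : G))⁻¹ * a ∈ H := by rw [e]; exact H.mul_mem h'.2 (H.inv_mem h.2)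
    have e1 : (a'⁻¹ * a : G0) = ⟨((a' : G))⁻¹ * a, m1⟩ := rfl
    have e2 : (h' * h⁻¹ : H) = ⟨((a' : G))⁻¹ * a, m2⟩ := Subtype.ext e.symm
    have h1 : π₁ (a'⁻¹ * a) = π₂ (h' * h⁻¹) := by
      rw [e1, e2]; exact hagree _ m1 m2
    have h2 : (π₁ a')⁻¹ * π₁ a = π₂ h' * (π₂ h)⁻¹ := by
      simpa [map_mul] using h1
    calc π₁ a * π₂ h = π₁ a' * ((π₁ a')⁻¹ * π₁ a) * π₂ h := by group
      _ = π₁ a' * (π₂ h' * (π₂ h)⁻¹) * π₂ h := by rw [h2]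
      _ = π₁ a' * π₂ h' := by group
  -- choose decompositions
  have hdec : ∀ g : G, ∃ p : G0 × H, g = (p.1 : G) * p.2 := by
    intro g
    obtain ⟨a, ha, h, hh, e⟩ := hGH g
    exact ⟨(⟨a, ha⟩, ⟨h, hh⟩), e⟩
  set d : G → G0 × H := fun g => (hdec g).choose with hdd
  have hd : ∀ g : G, g = ((d g).1 : G) * (d g).2 := fun g => (hdec g).choose_spec
  set f : G → P := fun g => π₁ (d g).1 * π₂ (d g).2 with hf
  have fmul : ∀ g g' : G, f (g * g') = f g * f g' := by
    intro g g'
    set a := (d g).1; set h := (d g).2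
    set a' := (d g').1; set h' := (d g').2
    set c : G0 := ⟨(h : G) * a' * (h : G)⁻¹, hconj h a'⟩ with hcd
    have e : ((d (g * g')).1 : G) * (d (g * g')).2 = ((a * c : G0) : G) * ((h * h' : H) : G) := by
      rw [← hd (g * g')]
      have : ((a * c : G0) : G) = (a : G) * ((h : G) * a' * (h : G)⁻¹) := rfl
      rw [this]
      have : ((h * h' : H) : G) = (h : G) * h' := rfl
      rw [this, hd g, hd g']
      group
      rfl
    have := L (d (g * g')).1 (d (g * g')).2 (a * c) (h * h') e
    rw [map_mul, map_mul] at this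
    have hkey := key h a'
    have hcp : π₁ c = π₂ h * π₁ a' * (π₂ h)⁻¹ := hkey
    show π₁ (d (g * g')).1 * π₂ (d (g * g')).2 = (π₁ a * π₂ h) * (π₁ a' * π₂ h')
    rw [this, hcp]
    group
  set πh : G →* P := MonoidHom.mk' f fmul with hπh
  have hG0eq : ∀ a : G0, πh (a : G) = π₁ a := by
    intro a
    have e : ((d (a : G)).1 : G) * (d (a : G)).2 = (a : G) * ((1 : H) : G) := by
      rw [← hd (a : G)]; simp
    have := L (d (a : G)).1 (d (a : G)).2 a 1 e
    simp at this
    exact this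
  refine ⟨πh, ?_, ?_⟩
  · apply continuous_of_continuousAt_one πh
    have hco : ContinuousOn πh (G0 : Set G) := by
      rw [continuousOn_iff_continuous_restrict]
      have : Set.domRestrict (G0 : Set G) πh = fun x => π₁ ⟨x.1, x.2⟩ :=
        funext fun x => hG0eq ⟨x.1, x.2⟩
      rw [this]
      exact hπ₁c.comp (Continuous.subtype_mk continuous_subtype_val _)
    exact hco.continuousAt (hopen.mem_nhds G0.one_mem)
  · intro g
    show ρ (π₁ (d g).1 * π₂ (d g).2) = π g
    rw [map_mul, hπ₁, hπ₂, ← map_mul, ← hd g]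
end

section
/- Let G = G₁ ⋊ G₂ be a semidirect product of topological groups where G₁ is connected and G₂ is discrete. Let ρ : P → Q be a double cover of topological groups and π : G → Q a continuous homomorphism. Then π lifts to a continuous homomorphism G → P if and only if π|_{G₁} and π|_{G₂} each lift to continuous homomorphisms into P. -/
open SemidirectProduct

section
variable {G₁ G₂ : Type*} [Group G₁] [TopologicalSpace G₁] [Group G₂]
  [TopologicalSpace G₂] (φ : G₂ →* MulAut G₁)

/-- The product topology on the semidirect product `G₁ ⋊[φ] G₂`. -/
instance sdpTopology : TopologicalSpace (G₁ ⋊[φ] G₂) :=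
  TopologicalSpace.induced (fun g => (g.left, g.right)) inferInstance

/- A representation π of G = G₁ ⋊ G₂ (G₁ connected topological group, G₂
discrete, acting by continuous automorphisms) into Q lifts through a double
cover ρ : P → Q iff its restrictions to G₁ and G₂ lift. -/
theorem stmt3 {P Q : Type*}
    [IsTopologicalGroup G₁] [ConnectedSpace G₁] [DiscreteTopology G₂]
    (hφ : ∀ g : G₂, Continuous (φ g))
    [Group P] [TopologicalSpace P] [IsTopologicalGroup P]
    [Group Q] [TopologicalSpace Q] [IsTopologicalGroup Q]
    (ρ : P →* Q) (hρc : Continuous ρ) (hρs : Function.Surjective ρ)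
    (hker : Nat.card ρ.ker = 2) (hkerd : DiscreteTopology ρ.ker)
    (π : G₁ ⋊[φ] G₂ →* Q) (hπc : Continuous π) :
    (∃ πh : G₁ ⋊[φ] G₂ →* P, Continuous πh ∧ ρ.comp πh = π) ↔
      ((∃ f : G₁ →* P, Continuous f ∧ ρ.comp f = π.comp inl) ∧
        (∃ g : G₂ →* P, Continuous g ∧ ρ.comp g = π.comp inr)) := by
  have hproj : Continuous (fun x : G₁ ⋊[φ] G₂ => (x.left, x.right)) := by
    rw [continuous_iff_le_induced]; exact le_of_eq rfl
  have hprojl : Continuous (fun x : G₁ ⋊[φ] G₂ => x.left) :=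
    continuous_fst.comp hproj
  have hprojr : Continuous (fun x : G₁ ⋊[φ] G₂ => x.right) :=
    continuous_snd.comp hproj
  constructor
  · rintro ⟨πh, hc, hcomp⟩
    have hinl : Continuous (inl : G₁ →* G₁ ⋊[φ] G₂) := by
      apply continuous_induced_rng.mpr
      exact continuous_id.prodMk continuous_const
    have hinr : Continuous (inr : G₂ →* G₁ ⋊[φ] G₂) := by
      apply continuous_induced_rng.mpr
      exact continuous_const.prodMk continuous_id
    exact ⟨⟨πh.comp inl, hc.comp hinl, by rw [← MonoidHom.comp_assoc, hcomp]⟩,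
           ⟨πh.comp inr, hc.comp hinr, by rw [← MonoidHom.comp_assoc, hcomp]⟩⟩
  · rintro ⟨⟨f, hfc, hf⟩, ⟨g, hgc, hg⟩⟩
    have hfq : ∀ a, ρ (f a) = π (inl a) := fun a => DFunLike.congr_fun hf a
    have hgq : ∀ b, ρ (g b) = π (inr b) := fun b => DFunLike.congr_fun hg b
    have key : ∀ (b : G₂) (a : G₁), f (φ b a) = g b * f a * (g b)⁻¹ := by
      intro b a
      set c : G₁ → ρ.ker := fun a =>
        ⟨f (φ b a) * (g b * f a * (g b)⁻¹)⁻¹, by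
          have : ρ (f (φ b a) * (g b * f a * (g b)⁻¹)⁻¹) = 1 := by
            simp only [map_mul, map_inv, hfq, hgq, inl_aut]
            group
          simpa [MonoidHom.mem_ker] using this⟩
      have hcc : Continuous c := by
        apply Continuous.subtype_mk
        exact ((hfc.comp (hφ b)).mul
          (((continuous_const.mul hfc).mul continuous_const).inv))
      have := PreconnectedSpace.constant (inferInstance) hcc (x := a) (y := 1)
      have h1 : c 1 = 1 := by
        apply Subtype.ext
        simp [c]
      rw [h1] at this
      have : f (φ b a) * (g b * f a * (g b)⁻¹)⁻¹ = 1 := congrArg Subtype.val this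
      have := mul_eq_one_iff_eq_inv.mp this
      simpa using this
    have hcompat : ∀ b : G₂,
        f.comp (φ b).toMonoidHom = (MulAut.conj (g b)).toMonoidHom.comp f := by
      intro b; ext a; simpa using key b a
    refine ⟨SemidirectProduct.lift f g hcompat, ?_, ?_⟩
    · have : (SemidirectProduct.lift f g hcompat : G₁ ⋊[φ] G₂ → P) =
        fun x => f x.left * g x.right := rfl
      rw [this]
      exact (hfc.comp hprojl).mul (hgc.comp hprojr)
    · ext x
      rw [← inl_left_mul_inr_right x]
      simp only [map_mul, MonoidHom.comp_apply, lift_inl, lift_inr, hfq, hgq]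
end
end

section
/- Let π be the real representation of C₂ = {±1} on ℝⁿ given by m copies of the sign character and n − m copies of the trivial character. Then π lifts through the double cover Pin(n) → O(n) (i.e., there is a homomorphism C₂ → Pin(n) covering π) if and only if m ≡ 0 or 3 (mod 4). -/
lemma aux_anticomm {A : Type*} [Ring A] (x : A) (l : List A)
    (h : ∀ y ∈ l, x * y = -(y * x)) :
    x * l.prod = (-1) ^ l.length * (l.prod * x) := by
  induction l with
  | nil => simp
  | cons a t ih =>
      have ha := h a List.mem_cons_self
      have ht := ih (fun y hy => h y (List.mem_cons_of_mem a hy))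
      simp only [List.prod_cons, List.length_cons]
      calc x * (a * t.prod) = (x * a) * t.prod := (mul_assoc _ _ _).symm
        _ = -(a * (x * t.prod)) := by rw [ha, neg_mul, mul_assoc]
        _ = -(a * ((-1) ^ t.length * (t.prod * x))) := by rw [ht]
        _ = (-1) ^ (t.length + 1) * (a * t.prod * x) := by
            rw [← mul_assoc a, ← ((Commute.neg_one_left a).pow_left t.length).eq,
              mul_assoc, pow_succ, mul_neg_one, neg_mul, mul_assoc a]

lemma aux_sq {n : ℕ} (Q : QuadraticForm ℝ (Fin n → ℝ)) (l : List (Fin n → ℝ))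
    (h1 : ∀ v ∈ l, CliffordAlgebra.ι Q v * CliffordAlgebra.ι Q v = -1)
    (h2 : l.Pairwise (fun a b =>
      CliffordAlgebra.ι Q a * CliffordAlgebra.ι Q b
        = -(CliffordAlgebra.ι Q b * CliffordAlgebra.ι Q a))) :
    (l.map (CliffordAlgebra.ι Q)).prod ^ 2
      = (-1) ^ (l.length * (l.length + 1) / 2) := by
  induction l with
  | nil => simp
  | cons a t ih =>
      rw [List.pairwise_cons] at h2
      have ht := ih (fun v hv => h1 v (List.mem_cons_of_mem a hv)) h2.2
      set T := (t.map (CliffordAlgebra.ι Q)).prod with hT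
      have hcomm : CliffordAlgebra.ι Q a * T
          = (-1) ^ t.length * (T * CliffordAlgebra.ι Q a) := by
        have := aux_anticomm (CliffordAlgebra.ι Q a) (t.map (CliffordAlgebra.ι Q)) ?_
        · simpa using this
        · intro y hy
          obtain ⟨v, hv, rfl⟩ := List.mem_map.mp hy
          exact h2.1 v hv
      have ha := h1 a List.mem_cons_self
      have key : (CliffordAlgebra.ι Q a * T) ^ 2
          = (-1) ^ (t.length + 1) * T ^ 2 := by
        calc (CliffordAlgebra.ι Q a * T) ^ 2
            = (CliffordAlgebra.ι Q a * T) * (CliffordAlgebra.ι Q a * T) := sq _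
          _ = ((-1) ^ t.length * (T * CliffordAlgebra.ι Q a))
              * (CliffordAlgebra.ι Q a * T) := by nth_rewrite 1 [hcomm]; rfl
          _ = (-1) ^ t.length
              * (T * (CliffordAlgebra.ι Q a * CliffordAlgebra.ι Q a) * T) := by
              simp only [mul_assoc]
          _ = (-1) ^ t.length * (T * (-1) * T) := by rw [ha]
          _ = (-1) ^ (t.length + 1) * T ^ 2 := by
              rw [pow_succ, mul_neg_one, sq]
              simp only [mul_neg, neg_mul, mul_assoc, one_mul]
      have hexp : (t.length + 1) * (t.length + 1 + 1) / 2
          = t.length * (t.length + 1) / 2 + (t.length + 1) := by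
        have := Nat.triangle_succ (t.length + 1)
        simpa [Nat.mul_comm] using this
      simp only [List.map_cons, List.prod_cons, List.length_cons, ← hT]
      rw [key, ht, ← pow_add]; congr 1; omega

lemma aux_parity (m : ℕ) :
    Even (m * (m + 1) / 2) ↔ (m % 4 = 0 ∨ m % 4 = 3) := by
  have he : m * (m + 1) = 2 * (m * (m + 1) / 2) :=
    (Nat.two_mul_div_two_of_even (Nat.even_mul_succ_self m)).symm
  have hmod : m * (m + 1) % 4 = (m % 4) * ((m % 4 + 1) % 4) % 4 := by
    conv_lhs => rw [Nat.mul_mod, Nat.add_mod m 1 4]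
  have h4 : m % 4 < 4 := Nat.mod_lt _ (by norm_num)
  set p := m * (m + 1) with hp
  rw [Nat.even_iff]
  interval_cases h : m % 4 <;> (norm_num at hmod ⊢) <;> omega

theorem stmt4 (n m : ℕ) (hm : m ≤ n)
    (Q : QuadraticForm ℝ (Fin n → ℝ)) (hQ : ∀ x, Q x = -∑ i, (x i) ^ 2) :
    (List.ofFn (fun i : Fin m =>
        CliffordAlgebra.ι Q (Pi.single (Fin.castLE hm i) (1 : ℝ)))).prod ^ 2 = 1 ↔
      (m % 4 = 0 ∨ m % 4 = 3) := by
  have hsingle : ∀ j : Fin n, Q (Pi.single j (1 : ℝ)) = -1 := by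
    intro j
    rw [hQ]
    simp [Pi.single_apply, apply_ite (· ^ (2:ℕ))]
  have hortho : ∀ j k : Fin n, j ≠ k →
      Q.IsOrtho (Pi.single j (1 : ℝ)) (Pi.single k (1 : ℝ)) := by
    intro j k hjk
    unfold QuadraticMap.IsOrtho
    rw [hQ, hQ, hQ]
    have : ∀ i : Fin n, ((Pi.single j (1:ℝ) : Fin n → ℝ) i + (Pi.single k (1:ℝ) : Fin n → ℝ) i) ^ 2
        = ((Pi.single j (1:ℝ) : Fin n → ℝ) i) ^ 2 + ((Pi.single k (1:ℝ) : Fin n → ℝ) i) ^ 2 := by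
      intro i
      rcases eq_or_ne i j with rfl | hij <;> rcases eq_or_ne i k with rfl | hik <;>
        simp_all [Pi.single_apply]
    simp only [Pi.add_apply, this, Finset.sum_add_distrib]
    ring
  set l : List (Fin n → ℝ) :=
    List.ofFn (fun i : Fin m => Pi.single (Fin.castLE hm i) (1 : ℝ)) with hl
  have hmap : (List.ofFn (fun i : Fin m =>
      CliffordAlgebra.ι Q (Pi.single (Fin.castLE hm i) (1 : ℝ))))
      = l.map (CliffordAlgebra.ι Q) := by
    rw [hl, List.map_ofFn]
    rfl
  have h1 : ∀ v ∈ l, CliffordAlgebra.ι Q v * CliffordAlgebra.ι Q v = -1 := by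
    intro v hv
    obtain ⟨i, rfl⟩ := List.mem_ofFn.mp hv
    rw [CliffordAlgebra.ι_sq_scalar, hsingle]
    simp
  have h2 : l.Pairwise (fun a b =>
      CliffordAlgebra.ι Q a * CliffordAlgebra.ι Q b
        = -(CliffordAlgebra.ι Q b * CliffordAlgebra.ι Q a)) := by
    rw [hl, List.pairwise_ofFn]
    intro i j hij
    exact CliffordAlgebra.ι_mul_ι_comm_of_isOrtho
      (hortho _ _ (by simpa using (Fin.castLE_injective hm).ne hij.ne))
  have hlen : l.length = m := by simp [hl]
  rw [hmap, aux_sq Q l h1 h2, hlen]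
  haveI : Nontrivial (CliffordAlgebra Q) := inferInstance
  have hne : (-1 : CliffordAlgebra Q) ≠ 1 := by
    intro hcontra
    have : algebraMap ℝ (CliffordAlgebra Q) (-1) = algebraMap ℝ (CliffordAlgebra Q) 1 := by
      simpa using hcontra
    have := (algebraMap ℝ (CliffordAlgebra Q)).injective this
    norm_num at this
  rw [neg_one_pow_eq_one_iff_even hne]
  exact aux_parity m
end

section
/- Let g₀ ∈ O(m) be any involution of the form diag(−1,…,−1,1,…,1) up to conjugacy, with X ↦ g₀Xg₀⁻¹ the adjoint action on skew-symmetric matrices. For g₀ the coordinate swap on the last two coordinates of ℝ^{2n}: the conjugation action Ad(g₀) on so(2n) has exactly 2n−1 eigenvalues equal to −1, and 2n−1 ≡ 3 (mod 4) if and only if n ≡ 0 (mod 2). Consequently the adjoint representation of O(2n) lifts to Pin if and only if 2n ≡ 0 (mod 4), given that Ad restricted to SO(2n) is spinorial. -/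
open Module

set_option maxHeartbeats 1000000
set_option synthInstance.maxHeartbeats 400000

private def aA (N : ℕ) : Fin (N+2) := ⟨N, by omega⟩
private def bB (N : ℕ) : Fin (N+2) := ⟨N+1, by omega⟩
private def sw (N : ℕ) : Equiv.Perm (Fin (N+2)) := Equiv.swap (aA N) (bB N)

private lemma aA_val (N : ℕ) : ((aA N : Fin (N+2)) : ℕ) = N := rfl
private lemma bB_val (N : ℕ) : ((bB N : Fin (N+2)) : ℕ) = N+1 := rfl

private lemma sw_lt (N : ℕ) {i : Fin (N+2)} (h : (i:ℕ) < N) : sw N i = i :=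
  Equiv.swap_apply_of_ne_of_ne
    (fun he => by rw [he, aA_val] at h; omega)
    (fun he => by rw [he, bB_val] at h; omega)

private lemma sw_a (N : ℕ) : sw N (aA N) = bB N := Equiv.swap_apply_left _ _
private lemma sw_b (N : ℕ) : sw N (bB N) = aA N := Equiv.swap_apply_right _ _

private lemma trich (N : ℕ) (i : Fin (N+2)) : (i:ℕ) < N ∨ i = aA N ∨ i = bB N := by
  have := i.isLt
  rcases Nat.lt_trichotomy (i:ℕ) N with h|h|h
  · exact Or.inl h
  · exact Or.inr (Or.inl (Fin.ext (by rw [aA_val]; omega)))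
  · exact Or.inr (Or.inr (Fin.ext (by rw [bB_val]; omega)))

private def psi (N : ℕ) (v : Fin (N+1) → ℝ) : Matrix (Fin (N+2)) (Fin (N+2)) ℝ :=
  Matrix.of fun i j =>
    if (i:ℕ) < N ∧ (j:ℕ) = N then v ⟨min i N, by omega⟩
    else if (i:ℕ) < N ∧ (j:ℕ) = N+1 then -(v ⟨min i N, by omega⟩)
    else if (i:ℕ) = N ∧ (j:ℕ) < N then -(v ⟨min j N, by omega⟩)
    else if (i:ℕ) = N+1 ∧ (j:ℕ) < N then v ⟨min j N, by omega⟩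
    else if (i:ℕ) = N ∧ (j:ℕ) = N+1 then v ⟨N, by omega⟩
    else if (i:ℕ) = N+1 ∧ (j:ℕ) = N then -(v ⟨N, by omega⟩)
    else 0

private lemma psi_skew (N : ℕ) (v : Fin (N+1) → ℝ) : (psi N v).transpose = -(psi N v) := by
  ext i j
  have hi := i.isLt
  have hj := j.isLt
  simp only [psi, Matrix.transpose_apply, Matrix.neg_apply, Matrix.of_apply]
  split_ifs <;> first | rfl | omega | ring

private lemma psi_eig (N : ℕ) (v : Fin (N+1) → ℝ) (i j : Fin (N+2)) :
    psi N v (sw N i) (sw N j) = -(psi N v i j) := by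
  have key : ∀ i' j' : Fin (N+2), (i':ℕ) < N → (j':ℕ) < N →
      psi N v (sw N i') (sw N j') = -(psi N v i' j') := by
    intro i' j' hi hj
    rw [sw_lt N hi, sw_lt N hj]
    simp only [psi, Matrix.of_apply]
    split_ifs <;> first | rfl | omega | ring
  rcases trich N i with hi|hi|hi <;> rcases trich N j with hj|hj|hj <;>
    try (exact key i j hi hj)
  all_goals subst_vars
  all_goals try rw [sw_a]
  all_goals try rw [sw_b]
  all_goals try rw [sw_lt N hi]
  all_goals try rw [sw_lt N hj]
  all_goals (
    simp only [psi, Matrix.of_apply, aA_val, bB_val]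
    split_ifs <;> first | rfl | omega | ring1 | simp_all)

private def phiv (N : ℕ) (X : Matrix (Fin (N+2)) (Fin (N+2)) ℝ) (k : Fin (N+1)) : ℝ :=
  X ⟨(k:ℕ), by omega⟩ (if (k:ℕ) < N then aA N else bB N)

private lemma psi_phi (N : ℕ) (X : Matrix (Fin (N+2)) (Fin (N+2)) ℝ)
    (hs : ∀ i j, X j i = -(X i j))
    (he : ∀ i j, X (sw N i) (sw N j) = -(X i j)) :
    psi N (phiv N X) = X := by
  have hXc : ∀ i₁ i₂ j₁ j₂ : Fin (N+2), (i₁:ℕ) = (i₂:ℕ) → (j₁:ℕ) = (j₂:ℕ) →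
      X i₁ j₁ = X i₂ j₂ := by
    intro i₁ i₂ j₁ j₂ h1 h2
    rw [Fin.ext h1, Fin.ext h2]
  have h0 : ∀ i j : Fin (N+2), (i:ℕ) < N → (j:ℕ) < N → X i j = 0 := by
    intro i j hi hj
    have := he i j
    rw [sw_lt N hi, sw_lt N hj] at this
    linarith
  have hib : ∀ i : Fin (N+2), (i:ℕ) < N → X i (bB N) = -(X i (aA N)) := by
    intro i hi
    have := he i (aA N)
    rwa [sw_lt N hi, sw_a] at this
  ext i j
  rcases trich N i with hi|hi|hi <;> rcases trich N j with hj|hj|hj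
  · -- i<N, j<N
    simp only [psi, Matrix.of_apply]
    rw [if_neg (by omega), if_neg (by omega), if_neg (by omega), if_neg (by omega),
      if_neg (by omega), if_neg (by omega), (h0 i j hi hj)]
  · -- i<N, j=a
    subst hj
    simp only [psi, Matrix.of_apply, aA_val]
    rw [if_pos (by constructor <;> first | assumption | trivial | rfl | omega)]
    simp only [phiv, Fin.val_mk]
    rw [if_pos (show min (i:ℕ) N < N by omega)]
    exact hXc _ _ _ _ (by simp only [Fin.val_mk]; omega) rfl
  · -- i<N, j=b
    subst hj
    simp only [psi, Matrix.of_apply, bB_val]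
    rw [if_neg (by omega), if_pos (by constructor <;> first | assumption | trivial | rfl | omega)]
    simp only [phiv, Fin.val_mk]
    rw [if_pos (show min (i:ℕ) N < N by omega), hib i hi]
    exact neg_inj.2 (hXc _ _ _ _ (by simp only [Fin.val_mk]; omega) rfl)
  · -- i=a, j<N
    subst hi
    simp only [psi, Matrix.of_apply, aA_val]
    rw [if_neg (by omega), if_neg (by omega), if_pos (by constructor <;> first | assumption | trivial | rfl | omega)]
    simp only [phiv, Fin.val_mk]
    rw [if_pos (show min (j:ℕ) N < N by omega), hs j (aA N)]
    exact neg_inj.2 (hXc _ _ _ _ (by simp only [Fin.val_mk]; omega) rfl)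
  · -- i=a, j=a
    subst hi; subst hj
    simp only [psi, Matrix.of_apply, aA_val]
    rw [if_neg (by omega), if_neg (by omega), if_neg (by omega), if_neg (by omega),
      if_neg (by omega), if_neg (by omega)]
    have := hs (aA N) (aA N); linarith
  · -- i=a, j=b
    subst hi; subst hj
    simp only [psi, Matrix.of_apply, aA_val, bB_val]
    rw [if_neg (by omega), if_neg (by omega), if_neg (by omega), if_neg (by omega),
      if_pos (by constructor <;> first | assumption | trivial | rfl | omega)]
    simp only [phiv, Fin.val_mk]
    rw [if_neg (by omega)]
    exact hXc _ _ _ _ rfl rfl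
  · -- i=b, j<N
    subst hi
    simp only [psi, Matrix.of_apply, bB_val]
    rw [if_neg (by omega), if_neg (by omega), if_neg (by omega), if_pos (by constructor <;> first | assumption | trivial | rfl | omega)]
    simp only [phiv, Fin.val_mk]
    rw [if_pos (show min (j:ℕ) N < N by omega)]
    have h1 : X (bB N) j = -(X j (bB N)) := hs j (bB N)
    rw [h1, hib j hj, neg_neg]
    exact hXc _ _ _ _ (by simp only [Fin.val_mk]; omega) rfl
  · -- i=b, j=a
    subst hi; subst hj
    simp only [psi, Matrix.of_apply, aA_val, bB_val]
    rw [if_neg (by omega), if_neg (by omega), if_neg (by omega), if_neg (by omega),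
      if_neg (by omega), if_pos (by constructor <;> first | assumption | trivial | rfl | omega)]
    simp only [phiv, Fin.val_mk]
    rw [if_neg (by omega), hs (aA N) (bB N)]
    exact neg_inj.2 (hXc _ _ _ _ rfl rfl)
  · -- i=b, j=b
    subst hi; subst hj
    simp only [psi, Matrix.of_apply, bB_val]
    rw [if_neg (by omega), if_neg (by omega), if_neg (by omega), if_neg (by omega),
      if_neg (by omega), if_neg (by omega)]
    have := hs (bB N) (bB N); linarith

private lemma phi_psi (N : ℕ) (v : Fin (N+1) → ℝ) : phiv N (psi N v) = v := by
  funext k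
  have hk := k.isLt
  by_cases h : (k:ℕ) < N
  · simp only [phiv, if_pos h, psi, Matrix.of_apply, aA_val, Fin.val_mk]
    rw [if_pos ⟨h, trivial⟩]
    congr 1
    exact Fin.ext (by simp only [Fin.val_mk]; omega)
  · have hk2 : (k:ℕ) = N := by omega
    simp only [phiv, if_neg h, psi, Matrix.of_apply, bB_val, Fin.val_mk]
    rw [if_neg (by omega), if_neg (by omega), if_neg (by omega), if_neg (by omega),
      if_pos ⟨hk2, trivial⟩]
    exact congrArg v (Fin.ext hk2.symm)

private lemma aux (M : ℕ) (hM : 2 ≤ M) (g₀ : Matrix (Fin M) (Fin M) ℝ)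
    (hg₀ : g₀ = (Equiv.swap (⟨M - 2, by omega⟩ : Fin M) ⟨M - 1, by omega⟩).permMatrix ℝ)
    (W : Submodule ℝ (Matrix (Fin M) (Fin M) ℝ))
    (hW : ∀ X, X ∈ W ↔ X.transpose = -X)
    (Adg : Module.End ℝ W)
    (hAd : ∀ X : W, (Adg X : Matrix (Fin M) (Fin M) ℝ) = g₀ * X * g₀) :
    finrank ℝ (Module.End.eigenspace Adg (-1)) = M - 1 := by
  obtain ⟨N, rfl⟩ : ∃ N, M = N + 2 := ⟨M - 2, by omega⟩
  have hg : g₀ = (sw N).permMatrix ℝ := hg₀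
  have hconj : ∀ X : Matrix (Fin (N+2)) (Fin (N+2)) ℝ,
      g₀ * X * g₀ = X.submatrix (sw N) (sw N) := by
    intro X
    rw [hg]
    show (sw N).toPEquiv.toMatrix * X * (sw N).toPEquiv.toMatrix = _
    rw [PEquiv.toMatrix_toPEquiv_mul, PEquiv.mul_toMatrix_toPEquiv,
      show (sw N).symm = sw N from Equiv.symm_swap _ _, Matrix.submatrix_submatrix]
    rfl
  have hmem : ∀ X : W, (X ∈ Module.End.eigenspace Adg (-1)) ↔
      ∀ i j, (X : Matrix (Fin (N+2)) (Fin (N+2)) ℝ) (sw N i) (sw N j)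
        = -((X : Matrix (Fin (N+2)) (Fin (N+2)) ℝ) i j) := by
    intro X
    rw [Module.End.mem_eigenspace_iff]
    constructor
    · intro h i j
      have h2 := congrArg Subtype.val h
      rw [hAd, hconj] at h2
      have h3 := congrFun (congrFun h2 i) j
      simpa using h3
    · intro h
      apply Subtype.ext
      rw [hAd, hconj]
      ext i j
      simpa using h i j
  have hskewX : ∀ X : Module.End.eigenspace Adg (-1), ∀ i j,
      (X.1.1 : Matrix (Fin (N+2)) (Fin (N+2)) ℝ) j i = -(X.1.1 i j) := by
    intro X i j
    have := (hW X.1.1).1 X.1.2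
    have h2 := congrFun (congrFun this i) j
    simpa using h2
  have hrec : ∀ X : Module.End.eigenspace Adg (-1), psi N (phiv N X.1.1) = X.1.1 := by
    intro X
    exact psi_phi N X.1.1 (hskewX X) ((hmem X.1).1 X.2)
  let Φ : Module.End.eigenspace Adg (-1) →ₗ[ℝ] (Fin (N+1) → ℝ) :=
    { toFun := fun X => phiv N X.1.1
      map_add' := fun X Y => rfl
      map_smul' := fun c X => rfl }
  have hbij : Function.Bijective Φ := by
    constructor
    · intro X Y h
      apply Subtype.ext; apply Subtype.ext
      rw [← hrec X, ← hrec Y]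
      exact congrArg (psi N) h
    · intro v
      refine ⟨⟨⟨psi N v, (hW _).2 (psi_skew N v)⟩, (hmem _).2 (fun i j => psi_eig N v i j)⟩, ?_⟩
      exact phi_psi N v
  rw [(LinearEquiv.ofBijective Φ hbij).finrank_eq, Module.finrank_fin_fun]
  omega

/- For g₀ ∈ O(2n) the swap of the last two coordinates, Ad(g₀) on so(2n) has
exactly 2n−1 eigenvalues −1; 2n−1 ≡ 3 (mod 4) iff n is even; consequently,
given the spinoriality criterion (the adjoint representation of O(2n) lifts to
Pin iff the multiplicity m of −1 satisfies m ≡ 0 or 3 mod 4, which holds given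
that Ad|_{SO(2n)} is spinorial), Ad lifts to Pin iff 2n ≡ 0 (mod 4). -/
theorem stmt11 (n : ℕ) (hn : 1 ≤ n)
    (g₀ : Matrix (Fin (2 * n)) (Fin (2 * n)) ℝ)
    (hg₀ : g₀ = (Equiv.swap (⟨2 * n - 2, by omega⟩ : Fin (2 * n))
      ⟨2 * n - 1, by omega⟩).permMatrix ℝ)
    (W : Submodule ℝ (Matrix (Fin (2 * n)) (Fin (2 * n)) ℝ))
    (hW : ∀ X, X ∈ W ↔ X.transpose = -X)
    (Adg : Module.End ℝ W)
    (hAd : ∀ X : W, (Adg X : Matrix (Fin (2 * n)) (Fin (2 * n)) ℝ) = g₀ * X * g₀)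
    (LiftsToPin : Prop)
    (hcrit : LiftsToPin ↔
      (finrank ℝ (Module.End.eigenspace Adg (-1)) % 4 = 0 ∨
        finrank ℝ (Module.End.eigenspace Adg (-1)) % 4 = 3)) :
    finrank ℝ (Module.End.eigenspace Adg (-1)) = 2 * n - 1 ∧
      ((2 * n - 1) % 4 = 3 ↔ n % 2 = 0) ∧
      (LiftsToPin ↔ (2 * n) % 4 = 0) := by
  have hrank := aux (2 * n) (by omega) g₀ hg₀ W hW Adg hAd
  refine ⟨hrank, by omega, ?_⟩
  rw [hcrit, hrank]
  omega
end
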